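/- Let H⁺ be a Garside submonoid of a Garside monoid G⁺ with Garside element Δ, and let δ be the common upper bound of H⁺ ∩ D(Δ). Then δ is balanced in H⁺: the set of left-divisors of δ lying in H⁺ equals the set of right-divisors of δ lying in H⁺, and both equal D(Δ) ∩ H⁺. -/
import Mathlib


namespace Garside

variable {M : Type*}

/-- left-divisibility -/
def LDvd [Monoid M] (a b : M) : Prop := ∃ c, b = a * c

/-- right-divisibility -/
def RDvd [Monoid M] (a b : M) : Prop := ∃ c, b = c * a

/-- Noetherian: lengths of factorizations into non-identity factors are bounded. -/
def NoetherianM (M : Type*) [Monoid M] : Prop :=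
  ∀ g : M, ∃ N : ℕ, ∀ l : List M, l.prod = g → (∀ x ∈ l, x ≠ 1) → l.length ≤ N

/-- balanced element: left divisors = right divisors -/
def Balanced [Monoid M] (δ : M) : Prop := ∀ g : M, LDvd g δ ↔ RDvd g δ

/-- the set of (left-)divisors of a (balanced) element -/
def D [Monoid M] (δ : M) : Set M := {g | LDvd g δ}

/-- atom of a monoid -/
def IsAtomM [Monoid M] (h : M) : Prop := h ≠ 1 ∧ ∀ g k : M, h = g * k → g = 1 ∨ k = 1

/-- support of a balanced element: atoms dividing it -/
def suppM [Monoid M] (δ : M) : Set M := {s | IsAtomM s ∧ LDvd s δ}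

/-- A Garside monoid structure on a cancellative monoid. -/
structure GarsideMonoid (M : Type*) [CancelMonoid M] where
  noeth : NoetherianM M
  wedgeL : M → M → M
  wedgeL_dvd_left : ∀ a b, LDvd (wedgeL a b) a
  wedgeL_dvd_right : ∀ a b, LDvd (wedgeL a b) b
  le_wedgeL : ∀ a b c, LDvd c a → LDvd c b → LDvd c (wedgeL a b)
  veeL : M → M → M
  dvd_veeL_left : ∀ a b, LDvd a (veeL a b)
  dvd_veeL_right : ∀ a b, LDvd b (veeL a b)
  veeL_le : ∀ a b c, LDvd a c → LDvd b c → LDvd (veeL a b) c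
  wedgeR : M → M → M
  wedgeR_dvd_left : ∀ a b, RDvd (wedgeR a b) a
  wedgeR_dvd_right : ∀ a b, RDvd (wedgeR a b) b
  le_wedgeR : ∀ a b c, RDvd c a → RDvd c b → RDvd c (wedgeR a b)
  veeR : M → M → M
  dvd_veeR_left : ∀ a b, RDvd a (veeR a b)
  dvd_veeR_right : ∀ a b, RDvd b (veeR a b)
  veeR_le : ∀ a b c, RDvd a c → RDvd b c → RDvd (veeR a b) c
  Δ : M
  balanced : Balanced Δ
  finD : (D Δ).Finite
  gen : Submonoid.closure (D Δ) = ⊤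

variable [CancelMonoid M]

/-- head function (left) -/
def GarsideMonoid.αL (G : GarsideMonoid M) (w : M) : M := G.wedgeL w G.Δ

/-- head function (right) -/
def GarsideMonoid.αR (G : GarsideMonoid M) (w : M) : M := G.wedgeR w G.Δ

/-- Garside submonoid: a sublattice submonoid closed under the head maps. -/
def IsGarsideSubmonoid (G : GarsideMonoid M) (H : Submonoid M) : Prop :=
  (∀ a ∈ H, ∀ b ∈ H,
      G.wedgeL a b ∈ H ∧ G.veeL a b ∈ H ∧ G.wedgeR a b ∈ H ∧ G.veeR a b ∈ H) ∧
  (∀ h ∈ H, G.αL h ∈ H ∧ G.αR h ∈ H)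

/-- least upper bound of a set for left-divisibility -/
def IsLubL (S : Set M) (δ : M) : Prop :=
  (∀ x ∈ S, LDvd x δ) ∧ ∀ c, (∀ x ∈ S, LDvd x c) → LDvd δ c

/-- least upper bound of a set for right-divisibility -/
def IsLubR (S : Set M) (δ : M) : Prop :=
  (∀ x ∈ S, RDvd x δ) ∧ ∀ c, (∀ x ∈ S, RDvd x c) → RDvd δ c

theorem garside_submonoid_element_balanced {M : Type*} [CancelMonoid M]
    (G : GarsideMonoid M) (H : Submonoid M) (hH : IsGarsideSubmonoid G H)
    (δ : M) (hL : IsLubL ((H : Set M) ∩ D G.Δ) δ) (hR : IsLubR ((H : Set M) ∩ D G.Δ) δ) :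
    {g | g ∈ H ∧ LDvd g δ} = {g | g ∈ H ∧ RDvd g δ} ∧
    {g | g ∈ H ∧ LDvd g δ} = D G.Δ ∩ (H : Set M) := by
  have hδL : LDvd δ G.Δ := hL.2 G.Δ (fun x hx => hx.2)
  have hδR : RDvd δ G.Δ := hR.2 G.Δ (fun x hx => (G.balanced x).1 hx.2)
  have key : ∀ g : M, (g ∈ H ∧ LDvd g δ) ↔ g ∈ D G.Δ ∩ (H : Set M) := by
    intro g
    constructor
    · rintro ⟨hg, c, rfl⟩
      obtain ⟨d, hd⟩ := hδL
      exact ⟨⟨c * d, by rw [hd, mul_assoc]⟩, hg⟩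
    · rintro ⟨hgD, hgH⟩
      exact ⟨hgH, hL.1 g ⟨hgH, hgD⟩⟩
  have keyR : ∀ g : M, (g ∈ H ∧ RDvd g δ) ↔ g ∈ D G.Δ ∩ (H : Set M) := by
    intro g
    constructor
    · rintro ⟨hg, c, rfl⟩
      obtain ⟨d, hd⟩ := hδR
      have : RDvd g G.Δ := ⟨d * c, by rw [hd, mul_assoc]⟩
      exact ⟨(G.balanced g).2 this, hg⟩
    · rintro ⟨hgD, hgH⟩
      exact ⟨hgH, hR.1 g ⟨hgH, hgD⟩⟩
  constructor
  · ext g; simp only [Set.mem_setOf_eq, key, keyR]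
  · ext g; simp only [Set.mem_setOf_eq, key]
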